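/- Let B = K[s_1,…,s_n]/I be a finite-dimensional monomial algebra, where I is an ideal generated by monomials. Then the subalgebra of End_K(B) generated by the restrictions of the partial derivative operators ∂/∂s_1,…,∂/∂s_n to B is isomorphic as a K-algebra to B itself, via the map sending s_i to ∂/∂s_i. -/

import Mathlib

open MvPolynomial

section Aux
variable {K : Type*} [Field K] {n : ℕ}

/-- In a monomial ideal, every monomial of a member lies in the ideal. -/
lemma aux_mono_mem {S : Set (MvPolynomial (Fin n) K)}
    (hS : ∀ p ∈ S, ∃ d : Fin n →₀ ℕ, p = monomial d 1) {p : MvPolynomial (Fin n) K}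
    (hp : p ∈ Ideal.span S) :
    ∀ d ∈ p.support, (monomial d 1 : MvPolynomial (Fin n) K) ∈ Ideal.span S := by
  induction hp using Submodule.span_induction with
  | mem x hx =>
    obtain ⟨a, rfl⟩ := hS x hx
    intro d hd
    have : d = a := by
      have := MvPolynomial.support_monomial_subset hd
      simpa using this
    subst this
    exact Ideal.subset_span hx
  | zero => intro d hd; simp at hd
  | add x y hx hy ihx ihy =>
    intro d hd
    rcases Finset.mem_union.mp (MvPolynomial.support_add hd) with h | h
    · exact ihx d h
    · exact ihy d h
  | smul a x hx ih =>
    intro d hd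
    rw [smul_eq_mul] at hd
    obtain ⟨u, hu, v, hv, rfl⟩ := Finset.mem_add.mp (MvPolynomial.support_mul a x hd)
    have : (monomial (u + v) 1 : MvPolynomial (Fin n) K)
        = monomial u 1 * monomial v 1 := by rw [monomial_mul, one_mul]
    rw [this]
    exact Ideal.mul_mem_left _ _ (ih v hv)

/-- Divisors of monomials outside an ideal are outside the ideal. -/
lemma aux_sub_notMem {I : Ideal (MvPolynomial (Fin n) K)} {d : Fin n →₀ ℕ}
    (h : monomial d (1 : K) ∉ I) (e : Fin n →₀ ℕ) : monomial (d - e) (1 : K) ∉ I := by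
  intro hmem
  apply h
  have key : (monomial (d - (d - e)) 1 : MvPolynomial (Fin n) K) * monomial (d - e) 1
      = monomial d 1 := by
    rw [monomial_mul, one_mul, tsub_add_cancel_of_le tsub_le_self]
  rw [← key]
  exact Ideal.mul_mem_left _ _ hmem

end Aux

section Act
variable {K : Type*} [Field K] {n : ℕ} {I : Ideal (MvPolynomial (Fin n) K)}
  {D : Fin n → Module.End K (MvPolynomial (Fin n) K ⧸ I)}
  (hD : ∀ (i : Fin n) (d : Fin n →₀ ℕ), monomial d (1 : K) ∉ I →
      D i (Ideal.Quotient.mk I (monomial d 1)) =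
        Ideal.Quotient.mk I (pderiv i (monomial d 1)))

include hD

lemma aux_act (i : Fin n) (d : Fin n →₀ ℕ) (hd : monomial d (1 : K) ∉ I) :
    D i (Ideal.Quotient.mk I (monomial d 1)) =
      (d i : K) • Ideal.Quotient.mk I (monomial (d - Finsupp.single i 1) 1) := by
  rw [hD i d hd, pderiv_monomial, one_mul]
  rw [show (monomial (d - Finsupp.single i 1) ((d i : K)) : MvPolynomial (Fin n) K)
      = (d i : K) • monomial (d - Finsupp.single i 1) 1 by
    rw [MvPolynomial.smul_monomial, smul_eq_mul, mul_one]]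
  rw [← Ideal.Quotient.mkₐ_eq_mk K I, map_smul]

lemma aux_pow (i : Fin n) (k : ℕ) : ∀ d : Fin n →₀ ℕ, monomial d (1 : K) ∉ I →
    (D i ^ k) (Ideal.Quotient.mk I (monomial d 1)) =
      ((Nat.descFactorial (d i) k : ℕ) : K) •
        Ideal.Quotient.mk I (monomial (d - Finsupp.single i k) 1) := by
  induction k with
  | zero =>
    intro d hd
    simp [Finsupp.single_zero]
  | succ k ih =>
    intro d hd
    rw [pow_succ', Module.End.mul_apply, ih d hd, map_smul,
      aux_act hD i _ (aux_sub_notMem hd _)]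
    rw [smul_smul, tsub_tsub, ← Finsupp.single_add]
    congr 1
    · rw [Finsupp.tsub_apply, Finsupp.single_eq_same, Nat.descFactorial_succ, Nat.cast_mul,
        mul_comm]
    
end Act

section ClaimA
variable {K : Type*} [Field K] {n : ℕ} {I : Ideal (MvPolynomial (Fin n) K)}
  {D : Fin n → Module.End K (MvPolynomial (Fin n) K ⧸ I)}
  (hD : ∀ (i : Fin n) (d : Fin n →₀ ℕ), monomial d (1 : K) ∉ I →
      D i (Ideal.Quotient.mk I (monomial d 1)) =
        Ideal.Quotient.mk I (pderiv i (monomial d 1)))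
  (Ψ : MvPolynomial (Fin n) K →ₐ[K] Module.End K (MvPolynomial (Fin n) K ⧸ I))
  (hΨX : ∀ i, Ψ (X i) = D i)

include hD hΨX

lemma aux_claimA (a : Fin n →₀ ℕ) : ∀ d : Fin n →₀ ℕ, monomial d (1 : K) ∉ I →
    Ψ (monomial a 1) (Ideal.Quotient.mk I (monomial d 1)) =
      ((∏ i, Nat.descFactorial (d i) (a i) : ℕ) : K) •
        Ideal.Quotient.mk I (monomial (d - a) 1) := by
  induction a using Finsupp.induction with
  | zero =>
    intro d hd
    simp [monomial_zero']
  | single_add i k b hib hk ih =>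
    intro d hd
    have hb : b i = 0 := Finsupp.notMem_support_iff.mp hib
    have hsplit : (monomial (Finsupp.single i k + b) 1 : MvPolynomial (Fin n) K)
        = X i ^ k * monomial b 1 := by
      rw [X_pow_eq_monomial, monomial_mul, one_mul]
    rw [hsplit, map_mul, map_pow, hΨX, Module.End.mul_apply, ih d hd, map_smul,
      aux_pow hD i k _ (aux_sub_notMem hd _), smul_smul]
    have hidx : d - b - Finsupp.single i k = d - (Finsupp.single i k + b) := by
      rw [tsub_tsub, add_comm]
    rw [hidx]
    congr 1
    rw [← Nat.cast_mul]
    congr 1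
    have hdb : (d - b) i = d i := by
      rw [Finsupp.tsub_apply, hb, Nat.sub_zero]
    rw [hdb]
    rw [← Finset.mul_prod_erase Finset.univ
        (fun j => Nat.descFactorial (d j) ((Finsupp.single i k + b) j)) (Finset.mem_univ i),
      ← Finset.mul_prod_erase Finset.univ
        (fun j => Nat.descFactorial (d j) (b j)) (Finset.mem_univ i)]
    rw [Finsupp.add_apply, Finsupp.single_eq_same, hb, add_zero, Nat.descFactorial_zero,
      one_mul, mul_comm]
    congr 1
    apply Finset.prod_congr rfl
    intro j hj
    have hji : j ≠ i := Finset.ne_of_mem_erase hj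
    rw [Finsupp.add_apply, Finsupp.single_eq_of_ne hji, zero_add]

end ClaimA

section Span
variable {K : Type*} [Field K] {n : ℕ} (I : Ideal (MvPolynomial (Fin n) K))

lemma aux_span :
    Submodule.span K (Set.range fun d : Fin n →₀ ℕ =>
      Ideal.Quotient.mk I (monomial d (1 : K))) = ⊤ := by
  have h1 : (Set.range fun d : Fin n →₀ ℕ => Ideal.Quotient.mk I (monomial d (1 : K)))
      = (Ideal.Quotient.mkₐ K I).toLinearMap ''
        (Set.range fun d : Fin n →₀ ℕ => (monomial d (1 : K) : MvPolynomial (Fin n) K)) := by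
    rw [← Set.range_comp]
    rfl
  rw [h1, ← Submodule.map_span]
  have h2 : Submodule.span K (Set.range fun d : Fin n →₀ ℕ =>
      (monomial d (1 : K) : MvPolynomial (Fin n) K)) = ⊤ := by
    have hb := (basisMonomials (Fin n) K).span_eq
    rw [show (Set.range fun d : Fin n →₀ ℕ => (monomial d (1 : K) : MvPolynomial (Fin n) K))
        = Set.range (basisMonomials (Fin n) K) from by
      rw [coe_basisMonomials]]
    exact hb
  rw [h2, Submodule.map_top, LinearMap.range_eq_top]
  exact Ideal.Quotient.mk_surjective

end Span

section Comm
variable {K : Type*} [Field K] {n : ℕ} {I : Ideal (MvPolynomial (Fin n) K)}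
  {D : Fin n → Module.End K (MvPolynomial (Fin n) K ⧸ I)}
  (hD : ∀ (i : Fin n) (d : Fin n →₀ ℕ), monomial d (1 : K) ∉ I →
      D i (Ideal.Quotient.mk I (monomial d 1)) =
        Ideal.Quotient.mk I (pderiv i (monomial d 1)))

include hD

lemma aux_comm (i j : Fin n) : D i * D j = D j * D i := by
  apply LinearMap.ext_on (aux_span I)
  rintro x ⟨d, rfl⟩
  by_cases hd : monomial d (1 : K) ∈ I
  · have h0 : Ideal.Quotient.mk I (monomial d (1 : K)) = 0 :=
      Ideal.Quotient.eq_zero_iff_mem.mpr hd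
    simp [Module.End.mul_apply, h0]
  · rcases eq_or_ne i j with rfl | hij
    · rfl
    rw [Module.End.mul_apply, Module.End.mul_apply,
      aux_act hD j d hd, aux_act hD i d hd, map_smul, map_smul,
      aux_act hD i _ (aux_sub_notMem hd _), aux_act hD j _ (aux_sub_notMem hd _),
      smul_smul, smul_smul]
    have hidx : d - Finsupp.single j 1 - Finsupp.single i 1
        = d - Finsupp.single i 1 - Finsupp.single j 1 := by
      rw [tsub_tsub, tsub_tsub, add_comm]
    rw [hidx]
    congr 1
    rw [Finsupp.tsub_apply, Finsupp.tsub_apply,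
      Finsupp.single_eq_of_ne hij, Finsupp.single_eq_of_ne (Ne.symm hij),
      Nat.sub_zero, Nat.sub_zero, mul_comm]

end Comm

set_option maxHeartbeats 1000000 in
set_option synthInstance.maxHeartbeats 200000 in
/-- For a finite-dimensional monomial algebra `B = K[s_1,…,s_n]/I`, the subalgebra of `End_K(B)`
generated by the (descended) partial derivative operators is isomorphic to `B` via `s_i ↦ ∂/∂s_i`. -/
theorem stmt_2 (K : Type*) [Field K] [CharZero K] (n : ℕ)
    (I : Ideal (MvPolynomial (Fin n) K))
    (hmono : ∃ S : Set (MvPolynomial (Fin n) K), I = Ideal.span S ∧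
      ∀ p ∈ S, ∃ d : Fin n →₀ ℕ, p = monomial d 1)
    (hfd : FiniteDimensional K (MvPolynomial (Fin n) K ⧸ I))
    (D : Fin n → Module.End K (MvPolynomial (Fin n) K ⧸ I))
    (hD : ∀ (i : Fin n) (d : Fin n →₀ ℕ), monomial d (1 : K) ∉ I →
      D i (Ideal.Quotient.mk I (monomial d 1)) =
        Ideal.Quotient.mk I (pderiv i (monomial d 1))) :
    ∃ φ : (MvPolynomial (Fin n) K ⧸ I) ≃ₐ[K] Algebra.adjoin K (Set.range D),
      ∀ i : Fin n,
        (φ (Ideal.Quotient.mk I (X i))).val = D i := by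
  classical
  obtain ⟨S, hIS, hSmono⟩ := hmono
  letI : CommRing (Algebra.adjoin K (Set.range D)) :=
    Algebra.adjoinCommRingOfComm K (by
      rintro _ ⟨i, rfl⟩ _ ⟨j, rfl⟩
      exact aux_comm hD i j)
  set D' : Fin n → Algebra.adjoin K (Set.range D) :=
    fun i => ⟨D i, Algebra.subset_adjoin ⟨i, rfl⟩⟩ with hD'
  set f : MvPolynomial (Fin n) K →ₐ[K] Algebra.adjoin K (Set.range D) := aeval (R := K) D' with hf
  set Ψ : MvPolynomial (Fin n) K →ₐ[K] Module.End K (MvPolynomial (Fin n) K ⧸ I) :=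
    ((Algebra.adjoin K (Set.range D)).val).comp f with hΨ
  have hΨX : ∀ i, Ψ (X i) = D i := by
    intro i
    simp [hΨ, hf, hD']
  have hΨval : ∀ p, Ψ p = (f p).val := fun _ => rfl
  -- I is contained in the kernel
  have hker1 : ∀ p ∈ I, Ψ p = 0 := by
    have hgen : ∀ q ∈ S, Ψ q = 0 := by
      intro q hq
      obtain ⟨a, rfl⟩ := hSmono q hq
      have haI : (monomial a 1 : MvPolynomial (Fin n) K) ∈ I := hIS ▸ Ideal.subset_span hq
      apply LinearMap.ext_on (aux_span I)
      rintro x ⟨d, rfl⟩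
      by_cases hd : monomial d (1 : K) ∈ I
      · simp [Ideal.Quotient.eq_zero_iff_mem.mpr hd]
      · rw [aux_claimA hD Ψ hΨX a d hd]
        have hlt : ∃ i, d i < a i := by
          by_contra hcon
          push_neg at hcon
          have hle : a ≤ d := Finsupp.le_def.mpr hcon
          apply hd
          have : (monomial (d - a) 1 : MvPolynomial (Fin n) K) * monomial a 1
              = monomial d 1 := by
            rw [monomial_mul, one_mul, tsub_add_cancel_of_le hle]
          rw [← this]
          exact Ideal.mul_mem_left _ _ haI
        obtain ⟨i, hi⟩ := hlt
        rw [Finset.prod_eq_zero (Finset.mem_univ i)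
          (Nat.descFactorial_eq_zero_iff_lt.mpr hi)]
        simp
    intro p hp
    have hle : I ≤ RingHom.ker Ψ.toRingHom := by
      refine hIS.le.trans (Ideal.span_le.mpr ?_)
      intro q hq
      simpa [RingHom.mem_ker] using hgen q hq
    have := hle hp
    rw [RingHom.mem_ker] at this
    exact this
  -- the kernel is contained in I
  have hker2 : ∀ p : MvPolynomial (Fin n) K, Ψ p = 0 → p ∈ I := by
    have key : ∀ N : ℕ, ∀ p : MvPolynomial (Fin n) K, p.support.card ≤ N → Ψ p = 0 → p ∈ I := by
      intro N
      induction N with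
      | zero =>
        intro p hcard _
        have : p = 0 := by
          rw [← MvPolynomial.support_eq_empty]
          exact Finset.card_eq_zero.mp (Nat.le_zero.mp hcard)
        rw [this]; exact I.zero_mem
      | succ N ih =>
        intro p hcard hΨp
        by_cases hex : ∃ d ∈ p.support, (monomial d 1 : MvPolynomial (Fin n) K) ∈ I
        · obtain ⟨d, hdsupp, hdI⟩ := hex
          have hmonI : (monomial d (coeff d p) : MvPolynomial (Fin n) K) ∈ I := by
            rw [show (monomial d (coeff d p) : MvPolynomial (Fin n) K)
                = C (coeff d p) * monomial d 1 by
              rw [C_mul_monomial, mul_one]]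
            exact Ideal.mul_mem_left _ _ hdI
          set q := p - monomial d (coeff d p) with hq
          have hqsupp : q.support ⊆ p.support.erase d := by
            intro e he
            rw [Finset.mem_erase]
            have hce : coeff e q ≠ 0 := MvPolynomial.mem_support_iff.mp he
            rw [hq, MvPolynomial.coeff_sub, MvPolynomial.coeff_monomial] at hce
            rcases eq_or_ne d e with rfl | hde
            · simp at hce
            · rw [if_neg hde, sub_zero] at hce
              exact ⟨Ne.symm hde, MvPolynomial.mem_support_iff.mpr hce⟩
          have hqcard : q.support.card ≤ N := by
            calc q.support.card ≤ (p.support.erase d).card := Finset.card_le_card hqsupp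
            _ = p.support.card - 1 := Finset.card_erase_of_mem hdsupp
            _ ≤ N := by omega
          have hΨq : Ψ q = 0 := by
            rw [hq, map_sub, hΨp, hker1 _ hmonI, sub_zero]
          have hqI : q ∈ I := ih q hqcard hΨq
          have : p = q + monomial d (coeff d p) := by rw [hq]; ring
          rw [this]
          exact I.add_mem hqI hmonI
        · push_neg at hex
          rcases eq_or_ne p 0 with rfl | hp0
          · exact I.zero_mem
          obtain ⟨e, heS, hemax⟩ : ∃ e ∈ p.support, ∀ x ∈ p.support, ¬ e < x := by
            obtain ⟨e, he⟩ := Finset.exists_maximal (MvPolynomial.support_nonempty.mpr hp0)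
            exact ⟨e, he.1, fun x hx hlt => absurd (he.2 hx hlt.le) (not_le_of_gt hlt)⟩
          have heI : (monomial e 1 : MvPolynomial (Fin n) K) ∉ I := hex e heS
          -- evaluate Ψ p at the class of the maximal monomial
          set cf : (Fin n →₀ ℕ) → K :=
            fun d => ((∏ i, Nat.descFactorial (e i) (d i) : ℕ) : K) with hcf
          have hmks : ∀ (c : K) (x : MvPolynomial (Fin n) K),
              Ideal.Quotient.mk I (c • x) = c • Ideal.Quotient.mk I x := by
            intro c x
            rw [← Ideal.Quotient.mkₐ_eq_mk K I]
            exact map_smul _ _ _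
          have hrw : Ψ p = ∑ d ∈ p.support, coeff d p • Ψ (monomial d 1) := by
            conv_lhs => rw [as_sum p]
            rw [map_sum]
            apply Finset.sum_congr rfl
            intro d _
            rw [show (monomial d (coeff d p) : MvPolynomial (Fin n) K)
                = coeff d p • monomial d 1 by
              rw [MvPolynomial.smul_monomial, smul_eq_mul, mul_one]]
            exact map_smul Ψ _ _
          set qq : MvPolynomial (Fin n) K :=
            ∑ d ∈ p.support, (coeff d p * cf d) • monomial (e - d) 1 with hqq
          have hmk0 : Ideal.Quotient.mk I qq = 0 := by
            have h1 : Ψ p (Ideal.Quotient.mk I (monomial e 1)) = Ideal.Quotient.mk I qq := by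
              rw [hrw, hqq, LinearMap.sum_apply, map_sum]
              apply Finset.sum_congr rfl
              intro d hd
              rw [LinearMap.smul_apply, aux_claimA hD Ψ hΨX d e heI, hmks, smul_smul]
            rw [← h1, hΨp]
            rfl
          have hqqI : qq ∈ I := Ideal.Quotient.eq_zero_iff_mem.mp hmk0
          have h1I : (1 : MvPolynomial (Fin n) K) ∉ I := by
            intro h
            exact heI (by simpa using I.mul_mem_left (monomial e 1) h)
          have hc0 : coeff 0 qq = coeff e p * cf e := by
            rw [hqq, MvPolynomial.coeff_sum]
            rw [Finset.sum_eq_single e]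
            · rw [MvPolynomial.coeff_smul, MvPolynomial.coeff_monomial, if_pos (by simp),
                smul_eq_mul, mul_one]
            · intro d hd hde
              rw [MvPolynomial.coeff_smul, MvPolynomial.coeff_monomial, if_neg, smul_zero]
              intro h0
              have hle : e ≤ d := tsub_eq_zero_iff_le.mp h0
              exact hemax d hd (lt_of_le_of_ne hle (Ne.symm hde))
            · intro h; exact absurd heS h
          have hcoeff0 : coeff 0 qq = 0 := by
            by_contra hne
            have h0s : (0 : Fin n →₀ ℕ) ∈ qq.support := MvPolynomial.mem_support_iff.mpr hne
            have := aux_mono_mem hSmono (hIS ▸ hqqI) 0 h0s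
            rw [monomial_zero', map_one] at this
            exact h1I (hIS ▸ this)
          have hcfe : cf e ≠ 0 := by
            rw [hcf]
            rw [Nat.cast_ne_zero]
            rw [Finset.prod_ne_zero_iff]
            intro i _
            rw [Nat.descFactorial_self]
            exact Nat.factorial_ne_zero _
          rw [hc0] at hcoeff0
          rcases mul_eq_zero.mp hcoeff0 with h | h
          · exact absurd h (MvPolynomial.mem_support_iff.mp heS)
          · exact absurd h hcfe
    intro p hp
    exact key p.support.card p le_rfl hp
  -- surjectivity of f
  have hrange : Ψ.range = Algebra.adjoin K (Set.range D) := by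
    have hmap := AlgHom.map_adjoin Ψ (Set.range (X : Fin n → MvPolynomial (Fin n) K))
    rw [adjoin_range_X, Algebra.map_top, ← Set.range_comp] at hmap
    have hcomp : (⇑Ψ ∘ X) = D := funext hΨX
    rw [hmap, hcomp]
  have hsurj : Function.Surjective f := by
    intro x
    have hx : (x : Module.End K (MvPolynomial (Fin n) K ⧸ I)) ∈ Ψ.range := by
      rw [hrange]; exact x.2
    obtain ⟨p, hp⟩ := hx
    exact ⟨p, Subtype.ext (by rw [← hp]; rfl)⟩
  have hkerf : I = RingHom.ker f := by
    ext p
    rw [RingHom.mem_ker]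
    constructor
    · intro hp
      have := hker1 p hp
      rw [hΨval] at this
      exact Subtype.ext this
    · intro hp
      apply hker2
      rw [hΨval, hp]
      rfl
  refine ⟨(Ideal.quotientEquivAlgOfEq K hkerf).trans
    (Ideal.quotientKerAlgEquivOfSurjective hsurj), ?_⟩
  intro i
  have h1 : (Ideal.quotientEquivAlgOfEq K hkerf) (Ideal.Quotient.mk I (X i))
      = Ideal.Quotient.mk (RingHom.ker f) (X i) := Ideal.quotientEquivAlgOfEq_mk K hkerf _
  have h2 : (Ideal.quotientKerAlgEquivOfSurjective hsurj)
      (Ideal.Quotient.mk (RingHom.ker f) (X i)) = f (X i) := by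
    rfl
  rw [AlgEquiv.trans_apply, h1, h2]
  have : (f (X i)).val = Ψ (X i) := rfl
  rw [this, hΨX]
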